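/- Let t > 0, γ > 0, r > 0, p₁ < 1 with p₁ ≠ 0, λ > 0 and c̄ > 0. Let W_t be a Gaussian random variable with mean 0 and variance t, set Z := exp(−(r + γ²/2)t − γ W_t) and define the optimal consumption c* := max((λZ)^(1/(p₁−1)), c̄). Then, with a := c̄^(p₁−1)/λ, the budget identity E[Z · c*] = λ^(1/(p₁−1)) · ξ(t, 0, 1, p₁/(p₁−1), 0, a) + c̄ · ξ(t, 0, 1, 1, a, +∞) holds. -/

import Mathlib

open MeasureTheory ProbabilityTheory

open scoped ENNReal

/-- Cumulative distribution function of the standard normal distribution. -/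
noncomputable def Phi (x : ℝ) : ℝ := ((gaussianReal 0 1) (Set.Iic x)).toReal

/-- `Φ(d̄(x) + kγ√(s − t))`, where `d̄(x) = (ln(z/x) − (r + γ²/2)(s − t)) / (γ √(s − t))`
for `x ∈ (0, ∞)`, with the conventions `Φ(d̄(0) + u) = 1` and `Φ(d̄(∞) + u) = 0`. -/
noncomputable def PhiDbar (γ r s t z k : ℝ) (x : ℝ≥0∞) : ℝ :=
  if x = 0 then 1
  else if x = ⊤ then 0
  else Phi ((Real.log (z / x.toReal) - (r + γ ^ 2 / 2) * (s - t)) / (γ * Real.sqrt (s - t))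
      + k * γ * Real.sqrt (s - t))

/-- `ξ(s, t, z, k, a, b; γ, r)`. -/
noncomputable def xi (γ r s t z k : ℝ) (a b : ℝ≥0∞) : ℝ :=
  z ^ k * Real.exp (-k * (r + γ ^ 2 / 2) * (s - t) + k ^ 2 * γ ^ 2 / 2 * (s - t)) *
    (PhiDbar γ r s t z k a - PhiDbar γ r s t z k b) * (if a < b then 1 else 0)

/-- `h(t₁, t₂) = exp((μ_F − σ_F²/2 − σ_F r/γ − σ_F γ/2)(t₂ − t₁))`. -/
noncomputable def hF (γ r μF σF t₁ t₂ : ℝ) : ℝ :=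
  Real.exp ((μF - σF ^ 2 / 2 - σF * r / γ - σF * γ / 2) * (t₂ - t₁))

section Helpers
open scoped NNReal Real
open Set

-- pointwise tilting
lemma pdf_tilt {t : ℝ} (ht : 0 < t) (θ w : ℝ) :
    Real.exp (θ * w) * gaussianPDFReal 0 t.toNNReal w
      = Real.exp (θ ^ 2 * t / 2) * gaussianPDFReal (θ * t) t.toNNReal w := by
  have hvt : ((t.toNNReal : ℝ≥0) : ℝ) = t := Real.coe_toNNReal t ht.le
  simp only [gaussianPDFReal, hvt, sub_zero]
  rw [mul_left_comm, mul_left_comm (Real.exp _)]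
  congr 1
  rw [← Real.exp_add, ← Real.exp_add]
  congr 1
  field_simp
  ring

lemma gaussianReal_Iic {t : ℝ} (ht : 0 < t) (m x : ℝ) :
    ((gaussianReal m t.toNNReal) (Set.Iic x)).toReal = Phi ((x - m) / Real.sqrt t) := by
  have hvt : ((t.toNNReal : ℝ≥0) : ℝ) = t := Real.coe_toNNReal t ht.le
  have hst : Real.sqrt t > 0 := Real.sqrt_pos.mpr ht
  have h1 : (NNReal.mk (Real.sqrt t ^ 2) (sq_nonneg _) * (1 : ℝ≥0) : ℝ≥0) = t.toNNReal := by
    ext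
    simp [Real.sq_sqrt ht.le, hvt]
  have hmap : (gaussianReal 0 1).map (fun y => Real.sqrt t * y + m) = gaussianReal m t.toNNReal := by
    have : (fun y => Real.sqrt t * y + m) = (fun y => y + m) ∘ (fun y => Real.sqrt t * y) := rfl
    rw [this, ← Measure.map_map (by fun_prop) (by fun_prop)]
    rw [gaussianReal_map_const_mul, h1, gaussianReal_map_add_const]
    norm_num
  rw [← hmap, Measure.map_apply (by fun_prop) measurableSet_Iic]
  have hpre : (fun y => Real.sqrt t * y + m) ⁻¹' Set.Iic x = Set.Iic ((x - m) / Real.sqrt t) := by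
    ext y
    simp only [Set.mem_preimage, Set.mem_Iic]
    rw [le_div_iff₀ hst]
    constructor <;> intro h <;> nlinarith
  rw [hpre]
  rfl

lemma gaussianReal_withDensity' {t : ℝ} (ht : 0 < t) (m : ℝ) :
    gaussianReal m t.toNNReal
      = volume.withDensity (fun x => ((gaussianPDFReal m t.toNNReal x).toNNReal : ℝ≥0∞)) := by
  have hv : t.toNNReal ≠ 0 := by
    simp only [ne_eq, Real.toNNReal_eq_zero, not_le]; exact ht
  rw [gaussianReal_of_var_ne_zero m hv]
  rfl

lemma tilt_setIntegral {t : ℝ} (ht : 0 < t) (θ : ℝ) {s : Set ℝ} (hs : MeasurableSet s) :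
    ∫ w in s, Real.exp (θ * w) ∂(gaussianReal 0 t.toNNReal)
      = Real.exp (θ ^ 2 * t / 2) * ((gaussianReal (θ * t) t.toNNReal) s).toReal := by
  have hv : t.toNNReal ≠ 0 := by
    simp only [ne_eq, Real.toNNReal_eq_zero, not_le]; exact ht
  rw [gaussianReal_withDensity' ht 0,
    setIntegral_withDensity_eq_setIntegral_smul
      ((measurable_gaussianPDFReal 0 t.toNNReal).real_toNNReal) _ hs]
  have heq : ∀ w : ℝ, ((gaussianPDFReal 0 t.toNNReal w).toNNReal : ℝ) • Real.exp (θ * w)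
      = Real.exp (θ ^ 2 * t / 2) * gaussianPDFReal (θ * t) t.toNNReal w := by
    intro w
    rw [smul_eq_mul, Real.coe_toNNReal _ (gaussianPDFReal_nonneg _ _ _), mul_comm]
    exact pdf_tilt ht θ w
  simp_rw [NNReal.smul_def, heq]
  rw [integral_const_mul]
  congr 1
  rw [gaussianReal_apply_eq_integral _ hv s, ENNReal.toReal_ofReal]
  exact setIntegral_nonneg hs fun x _ => gaussianPDFReal_nonneg _ _ _

lemma integrable_exp_mul_gaussian {t : ℝ} (ht : 0 < t) (θ : ℝ) :
    Integrable (fun w => Real.exp (θ * w)) (gaussianReal 0 t.toNNReal) := by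
  rw [gaussianReal_withDensity' ht 0,
    integrable_withDensity_iff_integrable_smul
      ((measurable_gaussianPDFReal 0 t.toNNReal).real_toNNReal)]
  have heq : ∀ w : ℝ, ((gaussianPDFReal 0 t.toNNReal w).toNNReal : ℝ≥0) • Real.exp (θ * w)
      = Real.exp (θ ^ 2 * t / 2) * gaussianPDFReal (θ * t) t.toNNReal w := by
    intro w
    rw [NNReal.smul_def, smul_eq_mul, Real.coe_toNNReal _ (gaussianPDFReal_nonneg _ _ _), mul_comm]
    exact pdf_tilt ht θ w
  simp_rw [heq]
  exact (integrable_gaussianPDFReal _ _).const_mul _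

lemma gaussianReal_Ici {t : ℝ} (ht : 0 < t) (m x : ℝ) :
    ((gaussianReal m t.toNNReal) (Set.Ici x)).toReal = 1 - Phi ((x - m) / Real.sqrt t) := by
  have hv : t.toNNReal ≠ 0 := by
    simp only [ne_eq, Real.toNNReal_eq_zero, not_le]; exact ht
  have hIio : (gaussianReal m t.toNNReal) (Set.Iio x) = (gaussianReal m t.toNNReal) (Set.Iic x) :=
    measure_congr (Iio_ae_eq_Iic' ((gaussianReal_absolutelyContinuous m hv) (by simp)))
  rw [show Set.Ici x = (Set.Iio x)ᶜ by simp, measure_compl measurableSet_Iio (measure_ne_top _ _),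
    measure_univ, hIio, ENNReal.toReal_sub_of_le prob_le_one ENNReal.one_ne_top,
    ENNReal.toReal_one, gaussianReal_Iic ht]


end Helpers

open Set in
theorem budget_identity_optimal_consumption
    (t γ r p₁ lam c : ℝ)
    (ht : 0 < t) (hγ : 0 < γ) (hr : 0 < r) (hp : p₁ < 1) (hp0 : p₁ ≠ 0)
    (hlam : 0 < lam) (hc : 0 < c) :
    (∫ w, Real.exp (-(r + γ ^ 2 / 2) * t - γ * w) *
        max ((lam * Real.exp (-(r + γ ^ 2 / 2) * t - γ * w)) ^ (1 / (p₁ - 1))) c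
        ∂(gaussianReal 0 (Real.toNNReal t)))
      = lam ^ (1 / (p₁ - 1)) *
          xi γ r t 0 1 (p₁ / (p₁ - 1)) 0 (ENNReal.ofReal (c ^ (p₁ - 1) / lam))
        + c * xi γ r t 0 1 1 (ENNReal.ofReal (c ^ (p₁ - 1) / lam)) ⊤ := by
  have hp1 : p₁ - 1 < 0 := by linarith
  set y : ℝ := 1 / (p₁ - 1) with hy_def
  set K : ℝ := p₁ / (p₁ - 1) with hK_def
  have hy : y < 0 := by
    rw [hy_def]; exact div_neg_of_pos_of_neg one_pos hp1
  have hne : p₁ - 1 ≠ 0 := sub_ne_zero.mpr hp.ne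
  have hyp : y * (p₁ - 1) = 1 := by
    rw [hy_def, one_div, inv_mul_cancel₀ hne]
  have hK : K = 1 + y := by
    rw [hK_def, hy_def]; field_simp; ring
  set R : ℝ := r + γ ^ 2 / 2 with hR_def
  set a : ℝ := c ^ (p₁ - 1) / lam with ha_def
  have ha : 0 < a := div_pos (Real.rpow_pos_of_pos hc _) hlam
  have hloga : Real.log a = (p₁ - 1) * Real.log c - Real.log lam := by
    rw [ha_def, Real.log_div (Real.rpow_pos_of_pos hc _).ne' hlam.ne', Real.log_rpow hc]
  set w₀ : ℝ := (-Real.log a - R * t) / γ with hw₀_def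
  have hw₀ : γ * w₀ = -Real.log a - R * t := by
    rw [hw₀_def]; field_simp
  -- global product identity
  have hprod : ∀ w : ℝ, Real.exp (-R * t - γ * w) * (lam * Real.exp (-R * t - γ * w)) ^ y
      = lam ^ y * Real.exp (-K * R * t - K * γ * w) := by
    intro w
    rw [Real.rpow_def_of_pos (mul_pos hlam (Real.exp_pos _)),
      Real.log_mul hlam.ne' (Real.exp_ne_zero _), Real.log_exp,
      Real.rpow_def_of_pos hlam, ← Real.exp_add, mul_comm (Real.exp _),
      ← Real.exp_add]
    congr 1
    rw [hK]; ring
  have h_ge : ∀ w : ℝ, w₀ ≤ w → c ≤ (lam * Real.exp (-R * t - γ * w)) ^ y := by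
    intro w hw
    rw [Real.rpow_def_of_pos (mul_pos hlam (Real.exp_pos _)),
      Real.log_mul hlam.ne' (Real.exp_ne_zero _), Real.log_exp]
    rw [show c = Real.exp (Real.log c) from (Real.exp_log hc).symm]
    apply Real.exp_le_exp.mpr
    have h1 : γ * w₀ ≤ γ * w := by nlinarith
    rw [hw₀] at h1
    have h2 : Real.log lam + (-R * t - γ * w) ≤ (p₁ - 1) * Real.log c := by
      rw [hloga] at h1; linarith
    have h3 := mul_le_mul_of_nonpos_right h2 hy.le
    have h4 : ((p₁ - 1) * Real.log c) * y = Real.log c := by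
      rw [mul_comm, ← mul_assoc, hyp, one_mul]
    linarith
  have h_lt : ∀ w : ℝ, w < w₀ → (lam * Real.exp (-R * t - γ * w)) ^ y ≤ c := by
    intro w hw
    rw [Real.rpow_def_of_pos (mul_pos hlam (Real.exp_pos _)),
      Real.log_mul hlam.ne' (Real.exp_ne_zero _), Real.log_exp]
    rw [show c = Real.exp (Real.log c) from (Real.exp_log hc).symm]
    apply Real.exp_le_exp.mpr
    have h1 : γ * w ≤ γ * w₀ := by nlinarith
    rw [hw₀] at h1
    have h2 : (p₁ - 1) * Real.log c ≤ Real.log lam + (-R * t - γ * w) := by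
      rw [hloga] at h1; linarith
    have h3 := mul_le_mul_of_nonpos_right h2 hy.le
    have h4 : ((p₁ - 1) * Real.log c) * y = Real.log c := by
      rw [mul_comm, ← mul_assoc, hyp, one_mul]
    linarith
  have hst : (0:ℝ) < Real.sqrt t := Real.sqrt_pos.mpr ht
  set C₁ : ℝ := lam ^ y * Real.exp (-(K * R * t)) with hC₁_def
  set C₂ : ℝ := c * Real.exp (-(R * t)) with hC₂_def
  set θ₁ : ℝ := -(K * γ) with hθ₁_def
  set θ₂ : ℝ := -γ with hθ₂_def
  have e1 : ∀ w : ℝ, Real.exp (-R * t - γ * w) * (lam * Real.exp (-R * t - γ * w)) ^ y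
      = C₁ * Real.exp (θ₁ * w) := by
    intro w
    rw [hprod w, hC₁_def, hθ₁_def, mul_assoc (lam ^ y), ← Real.exp_add]
    congr 2
    ring
  have e2 : ∀ w : ℝ, Real.exp (-R * t - γ * w) * c = C₂ * Real.exp (θ₂ * w) := by
    intro w
    rw [hC₂_def, hθ₂_def, mul_comm _ c, mul_assoc c, ← Real.exp_add]
    congr 2
    ring
  have hf_eq : (fun w => Real.exp (-R * t - γ * w) *
        max ((lam * Real.exp (-R * t - γ * w)) ^ y) c)
      = fun w => max (C₁ * Real.exp (θ₁ * w)) (C₂ * Real.exp (θ₂ * w)) := by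
    funext w
    rw [mul_max_of_nonneg _ _ (Real.exp_pos _).le, e1 w, e2 w]
  have hint : Integrable (fun w => Real.exp (-R * t - γ * w) *
        max ((lam * Real.exp (-R * t - γ * w)) ^ y) c) (gaussianReal 0 t.toNNReal) := by
    rw [hf_eq]
    have h1 := (integrable_exp_mul_gaussian ht θ₁).const_mul C₁
    have h2 := (integrable_exp_mul_gaussian ht θ₂).const_mul C₂
    exact h1.sup h2
  have hIci : ∫ w in Set.Ici w₀, Real.exp (-R * t - γ * w) *
        max ((lam * Real.exp (-R * t - γ * w)) ^ y) c ∂(gaussianReal 0 t.toNNReal)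
      = C₁ * (Real.exp (θ₁ ^ 2 * t / 2) * (1 - Phi ((w₀ - θ₁ * t) / Real.sqrt t))) := by
    rw [setIntegral_congr_fun measurableSet_Ici (fun w hw => by
      rw [max_eq_left (h_ge w hw), e1 w])]
    rw [MeasureTheory.integral_const_mul, tilt_setIntegral ht θ₁ measurableSet_Ici,
      gaussianReal_Ici ht]
  have hIio : ∫ w in Set.Iio w₀, Real.exp (-R * t - γ * w) *
        max ((lam * Real.exp (-R * t - γ * w)) ^ y) c ∂(gaussianReal 0 t.toNNReal)
      = C₂ * (Real.exp (θ₂ ^ 2 * t / 2) * Phi ((w₀ - θ₂ * t) / Real.sqrt t)) := by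
    rw [setIntegral_congr_fun measurableSet_Iio (fun w hw => by
      rw [max_eq_right (h_lt w hw), e2 w])]
    have hvne : t.toNNReal ≠ 0 := by
      simp only [ne_eq, Real.toNNReal_eq_zero, not_le]; exact ht
    rw [setIntegral_congr_set (Iio_ae_eq_Iic'
      ((gaussianReal_absolutelyContinuous 0 hvne) (by simp)))]
    rw [MeasureTheory.integral_const_mul, tilt_setIntegral ht θ₂ measurableSet_Iic,
      gaussianReal_Iic ht]
  -- split the integral
  have hsplit : (∫ w, Real.exp (-R * t - γ * w) *
        max ((lam * Real.exp (-R * t - γ * w)) ^ y) c ∂(gaussianReal 0 t.toNNReal))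
      = C₁ * (Real.exp (θ₁ ^ 2 * t / 2) * (1 - Phi ((w₀ - θ₁ * t) / Real.sqrt t)))
        + C₂ * (Real.exp (θ₂ ^ 2 * t / 2) * Phi ((w₀ - θ₂ * t) / Real.sqrt t)) := by
    rw [← integral_add_compl measurableSet_Ici hint, Set.compl_Ici, hIci, hIio]
  -- RHS simplification
  have hA0 : ENNReal.ofReal a ≠ 0 := (ENNReal.ofReal_pos.mpr ha).ne'
  have hAlt : (0 : ℝ≥0∞) < ENNReal.ofReal a := ENNReal.ofReal_pos.mpr ha
  have hAtoReal : (ENNReal.ofReal a).toReal = a := ENNReal.toReal_ofReal ha.le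
  have hangle : ∀ K' : ℝ, (Real.log (1 / a) - R * t) / (γ * Real.sqrt t)
      + K' * γ * Real.sqrt t = (w₀ - -(K' * γ) * t) / Real.sqrt t := by
    intro K'
    rw [Real.log_div one_ne_zero ha.ne', Real.log_one, zero_sub]
    have h1 : -Real.log a - R * t = γ * w₀ := hw₀.symm
    rw [show -Real.log a - R * t = γ * w₀ by linarith [hw₀]]
    have h2 : Real.sqrt t * Real.sqrt t = t := Real.mul_self_sqrt ht.le
    rw [mul_div_mul_left _ _ hγ.ne', div_add' _ _ _ hst.ne']
    congr 1
    rw [mul_assoc, h2]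
    ring
  rw [hsplit]
  unfold xi PhiDbar
  simp only [if_pos rfl, if_neg hA0, if_neg (ENNReal.ofReal_ne_top (r := a)),
    ENNReal.zero_ne_top, ENNReal.top_ne_zero, if_neg, reduceIte, sub_zero,
    hAtoReal, if_pos hAlt, if_pos ENNReal.ofReal_lt_top, mul_one, Real.one_rpow]
  rw [hangle K, hangle 1, ← hθ₁_def]
  have hth2 : -(1 * γ) = θ₂ := by rw [hθ₂_def]; ring
  rw [hth2]
  have hth1sq : θ₁ ^ 2 = K ^ 2 * γ ^ 2 := by rw [hθ₁_def]; ring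
  have hth2sq : θ₂ ^ 2 = γ ^ 2 := by rw [hθ₂_def]; ring
  rw [hC₁_def, hC₂_def, hth1sq, hth2sq]
  simp only [← hR_def, Real.exp_add, one_mul, one_pow]
  ring_nf
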